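/- In the inexact proximal point setting, for all j ≥ 0 the function gap at x_{j+1} satisfies f(x_{j+1}) - f* ≤ (f^j(x_{j+1}) - f^j(x̄_{j+1})) + Σ_{i=0}^{j} (λ_i/2)‖x̄_i - x_i‖². -/
import Mathlib


open Set Finset

/-- inexact proximal point error decomposition.  Here `lam 0 = 0` plays the
role of `λ₋₁` and `λ_i` from the paper is `lam (i+1)`.  For all `0 ≤ j ≤ T`,
`f(x_{j+1}) - f* ≤ (f^j(x_{j+1}) - f^j(x̄_{j+1})) + ∑_{i=0}^{j} (λ_i/2)‖x̄_i - x_i‖²`. -/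
theorem inexact_prox_error_decomposition {d : ℕ} (T : ℕ) (μ : ℝ) (hμ : 0 < μ)
    (f : EuclideanSpace ℝ (Fin d) → ℝ)
    (hlsc : LowerSemicontinuous f)
    (hsc : ConvexOn ℝ Set.univ (fun x => f x - μ / 2 * ‖x‖ ^ 2))
    (lam : ℕ → ℝ) (hlam0 : lam 0 = 0) (hmono : Monotone lam)
    (hpos : ∀ i, 1 ≤ i → i ≤ T + 1 → 0 < lam i)
    (x xbar : ℕ → EuclideanSpace ℝ (Fin d))
    (fstar : ℝ) (hfstar : fstar = f (xbar 0))
    (hmin0 : ∀ y, f (xbar 0) ≤ f y)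
    (hmin : ∀ i y, f (xbar (i + 1)) + lam (i + 1) / 2 * ‖xbar (i + 1) - x i‖ ^ 2
        ≤ f y + lam (i + 1) / 2 * ‖y - x i‖ ^ 2) :
    ∀ j, j ≤ T →
      f (x (j + 1)) - fstar
        ≤ ((f (x (j + 1)) + lam (j + 1) / 2 * ‖x (j + 1) - x j‖ ^ 2)
            - (f (xbar (j + 1)) + lam (j + 1) / 2 * ‖xbar (j + 1) - x j‖ ^ 2))
          + ∑ i ∈ Finset.range (j + 1), lam (i + 1) / 2 * ‖xbar i - x i‖ ^ 2 := by
  have hnn : ∀ k, 0 ≤ lam k := fun k => hlam0 ▸ hmono (Nat.zero_le k)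
  have key : ∀ j, f (xbar (j+1)) + lam (j+1)/2 * ‖xbar (j+1) - x j‖^2 - f (xbar 0)
      ≤ ∑ i ∈ Finset.range (j+1), lam (i+1)/2 * ‖xbar i - x i‖^2 := by
    intro j
    induction j with
    | zero =>
      have := hmin 0 (xbar 0)
      simp only [zero_add, Finset.sum_range_one]
      linarith
    | succ n ih =>
      rw [Finset.sum_range_succ]
      have h1 := hmin (n+1) (xbar (n+1))
      have h2 : 0 ≤ lam (n+1)/2 * ‖xbar (n+1) - x n‖^2 :=
        mul_nonneg (by linarith [hnn (n+1)]) (sq_nonneg _)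
      linarith
  intro j hj
  have h2 : 0 ≤ lam (j+1)/2 * ‖x (j+1) - x j‖^2 :=
    mul_nonneg (by linarith [hnn (j+1)]) (sq_nonneg _)
  have := key j
  subst hfstar
  linarith
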